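/- Let Θ be a Jacobi-type pencil with associated operator A and associated polynomials (p_n). Let (r_n) be the polynomials defined by r₀(λ) = 1 and the three-term recurrence λ·r_n = a_{n−1} r_{n−1} + b_n r_n + a_n r_{n+1} (terms with negative indices omitted), let σ be any nonnegative Borel measure on ℝ with ∫ r_n(x) r_m(x) dσ = δ_{n,m} for all n, m, and let T be the linear operator on complex polynomials determined by T(r_n) = Σ_m (A e_n)(m)·r_m for all n ≥ 0 (the model representation of A in L²_σ). Then ∫ (p_n(T)(1))(x) · conj((p_m(T)(1))(x)) dσ(x) = δ_{n,m} for all n, m ≥ 0. -/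

import Mathlib

open Polynomial MeasureTheory

noncomputable section

/-- The standard basis of the space of finitely supported complex sequences. -/
def e (n : ℕ) : ℕ →₀ ℂ := Finsupp.single n 1

/-- The standard basis extended by zero to negative indices. -/
def eZ (n : ℤ) : ℕ →₀ ℂ := if n < 0 then 0 else e n.toNat

/-- Extension of a real sequence by zero to negative indices. -/
def extZ (a : ℕ → ℝ) (n : ℤ) : ℝ := if n < 0 then 0 else a n.toNat

/-- Extension of a sequence of polynomials by zero to negative indices. -/
def extP (p : ℕ → Polynomial ℂ) (n : ℤ) : Polynomial ℂ := if n < 0 then 0 else p n.toNat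

/-- The data of a Jacobi-type pencil `Θ = (J₃, J₅, α, β)`:
`a`, `b` are the entries of the Jacobi matrix `J₃` (`a n > 0`);
`al`, `be`, `ga` are the entries of the five-diagonal matrix `J₅` (`ga n > 0`);
`α > 0`, `β ∈ ℝ`. -/
structure JacobiPencil where
  a : ℕ → ℝ
  b : ℕ → ℝ
  al : ℕ → ℝ
  be : ℕ → ℝ
  ga : ℕ → ℝ
  α : ℝ
  β : ℝ
  ha : ∀ n, 0 < a n
  hga : ∀ n, 0 < ga n
  hα : 0 < α

/-- The `n`-th column `J₃ e_n = a_{n-1} e_{n-1} + b_n e_n + a_n e_{n+1}` of the Jacobi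
matrix (terms with negative indices omitted). -/
def J3col (Θ : JacobiPencil) (n : ℕ) : ℕ →₀ ℂ :=
  (extZ Θ.a ((n : ℤ) - 1) : ℂ) • eZ ((n : ℤ) - 1) + (Θ.b n : ℂ) • e n + (Θ.a n : ℂ) • e (n + 1)

/-- The `n`-th column
`J₅ e_n = γ_{n-2} e_{n-2} + β_{n-1} e_{n-1} + α_n e_n + β_n e_{n+1} + γ_n e_{n+2}`
of the five-diagonal matrix (terms with negative indices omitted). -/
def J5col (Θ : JacobiPencil) (n : ℕ) : ℕ →₀ ℂ :=
  (extZ Θ.ga ((n : ℤ) - 2) : ℂ) • eZ ((n : ℤ) - 2)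
    + (extZ Θ.be ((n : ℤ) - 1) : ℂ) • eZ ((n : ℤ) - 1)
    + (Θ.al n : ℂ) • e n + (Θ.be n : ℂ) • e (n + 1) + (Θ.ga n : ℂ) • e (n + 2)

/-- `A` is the associated operator of the Jacobi-type pencil `Θ`:
`A e₀ = (1/α)(e₁ - β e₀)` and `A (J₃ eₙ) = J₅ eₙ` for all `n`. -/
def IsAssociatedOperator (Θ : JacobiPencil) (A : Module.End ℂ (ℕ →₀ ℂ)) : Prop :=
  A (e 0) = ((Θ.α : ℂ))⁻¹ • (e 1 - (Θ.β : ℂ) • e 0) ∧ ∀ n : ℕ, A (J3col Θ n) = J5col Θ n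

/-- `p` is the family of polynomials associated to the Jacobi-type pencil `Θ`:
`p₀ = 1`, `p₁(λ) = αλ + β`, and for all `n ≥ 0`
`γ_n p_{n+2} = -γ_{n-2} p_{n-2} - (β_{n-1} - λ a_{n-1}) p_{n-1}
  - (α_n - λ b_n) p_n - (β_n - λ a_n) p_{n+1}`,
with `p_{-2} = p_{-1} = 0` and coefficients with negative indices set to zero. -/
def IsAssociatedPolynomials (Θ : JacobiPencil) (p : ℕ → Polynomial ℂ) : Prop :=
  p 0 = 1 ∧ p 1 = C (Θ.α : ℂ) * X + C (Θ.β : ℂ) ∧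
  ∀ n : ℕ, C (Θ.ga n : ℂ) * p (n + 2) =
      - C (extZ Θ.ga ((n : ℤ) - 2) : ℂ) * extP p ((n : ℤ) - 2)
      - (C (extZ Θ.be ((n : ℤ) - 1) : ℂ) - X * C (extZ Θ.a ((n : ℤ) - 1) : ℂ))
          * extP p ((n : ℤ) - 1)
      - (C (Θ.al n : ℂ) - X * C (Θ.b n : ℂ)) * p n
      - (C (Θ.be n : ℂ) - X * C (Θ.a n : ℂ)) * p (n + 1)

/-- The `l₂` inner product `Σ_{k≥0} f(k) conj(g(k))` of two finitely supported sequences. -/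
def ipl2 (f g : ℕ →₀ ℂ) : ℂ := ∑ k ∈ f.support ∪ g.support, f k * (starRingEnd ℂ) (g k)

/-- The inner product `⟨u, v⟩_σ = ∫ u(x) conj(v(x)) dσ(x)` of two complex polynomials. -/
def ipm (σ : Measure ℝ) (u v : Polynomial ℂ) : ℂ :=
  ∫ x, u.eval (x : ℂ) * (starRingEnd ℂ) (v.eval (x : ℂ)) ∂σ

/-- All power moments of `σ` are finite. -/
def HasFiniteMoments (σ : Measure ℝ) : Prop := ∀ k : ℕ, Integrable (fun x => x ^ k) σ

/-- `∫ |g|² dσ > 0` for every nonzero complex polynomial `g`. -/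
def PosOnPolys (σ : Measure ℝ) : Prop :=
  ∀ g : Polynomial ℂ, g ≠ 0 → 0 < ∫ x, ‖g.eval (x : ℂ)‖ ^ 2 ∂σ

/-- Condition (ii): for each `k`, `T x^k = ξ_{k,k+1} x^{k+1} + Σ_{j=0}^k ξ_{k,j} x^j`
with `ξ_{k,k+1} > 0` and all `ξ_{k,j}` real. -/
def CondII (T : Module.End ℂ (Polynomial ℂ)) : Prop :=
  ∀ k : ℕ, ∃ ξ : ℕ → ℝ, 0 < ξ (k + 1) ∧
    T (X ^ k) = ∑ j ∈ Finset.range (k + 2), C (ξ j : ℂ) * X ^ j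

/-- Condition (iii): `⟨T(x·u), v⟩_σ = ⟨u, T(x·v)⟩_σ` for all polynomials `u`, `v`,
i.e., the operator `T Λ₀` is symmetric. -/
def CondIII (σ : Measure ℝ) (T : Module.End ℂ (Polynomial ℂ)) : Prop :=
  ∀ u v : Polynomial ℂ, ipm σ (T (X * u)) v = ipm σ u (T (X * v))

/-- Orthonormality of the associated polynomials with respect to the model representation:
`∫ p_n(T)(1) conj(p_m(T)(1)) dσ = δ_{n,m}`, where `T` is the model representation in
`L²_σ` of the associated operator `A`. -/
theorem assoc_poly_orthonormal_in_model (Θ : JacobiPencil) (A : Module.End ℂ (ℕ →₀ ℂ))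
    (hA : IsAssociatedOperator Θ A) (p : ℕ → Polynomial ℂ)
    (hp : IsAssociatedPolynomials Θ p)
    (r : ℕ → Polynomial ℂ) (hr0 : r 0 = 1)
    (hrec : ∀ n : ℕ, X * r n =
      C (extZ Θ.a ((n : ℤ) - 1) : ℂ) * extP r ((n : ℤ) - 1) + C (Θ.b n : ℂ) * r n
        + C (Θ.a n : ℂ) * r (n + 1))
    (σ : Measure ℝ)
    (horth : ∀ n m : ℕ, ipm σ (r n) (r m) = if n = m then 1 else 0)
    (T : Module.End ℂ (Polynomial ℂ))
    (hT : ∀ n : ℕ, T (r n) = (A (e n)).sum fun m c => c • r m) (n m : ℕ) :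
    ipm σ ((Polynomial.aeval T (p n)) 1) ((Polynomial.aeval T (p m)) 1)
      = if n = m then 1 else 0 := by
  classical
  set U : (ℕ →₀ ℂ) →ₗ[ℂ] Polynomial ℂ := Finsupp.linearCombination ℂ r with hU
  have hUe : ∀ k, U (e k) = r k := by
    intro k; simp [hU, e, Finsupp.linearCombination_single]
  have hUeZ : ∀ k : ℤ, U (eZ k) = extP r k := by
    intro k
    by_cases h : k < 0
    · simp [eZ, extP, h]
    · simp [eZ, extP, h, hUe]
  have hTr : ∀ k, T (r k) = U (A (e k)) := by
    intro k; rw [hT k, hU, Finsupp.linearCombination_apply]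
  have hTU : ∀ f, T (U f) = U (A f) := by
    intro f
    induction f using Finsupp.induction_linear with
    | zero => simp
    | add f g hf hg => simp only [map_add, hf, hg]
    | single a b =>
      have h1 : (Finsupp.single a b : ℕ →₀ ℂ) = b • e a := by
        simp [e, Finsupp.smul_single]
      simp only [h1, _root_.map_smul, hUe, hTr]
  have key : ∀ N, (Polynomial.aeval T (p N)) 1 = r N := by
    intro N
    induction N using Nat.strong_induction_on with
    | _ N ih =>
      match N, ih with
      | 0, _ => simp [hp.1, hr0]
      | 1, _ =>
        have hα : (Θ.α : ℂ) ≠ 0 := by exact_mod_cast (ne_of_gt Θ.hα)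
        have h1 : T (1 : Polynomial ℂ) = ((Θ.α : ℂ))⁻¹ • (r 1 - (Θ.β : ℂ) • (1 : Polynomial ℂ)) := by
          rw [← hr0, hTr, hA.1, _root_.map_smul, map_sub, _root_.map_smul, hUe, hUe, hr0]
        rw [hp.2.1]
        simp only [map_add, map_mul, aeval_C, aeval_X, LinearMap.add_apply,
          Module.End.mul_apply, Module.algebraMap_end_apply, map_one, h1, _root_.map_smul,
          smul_smul, inv_mul_cancel₀ hα, one_smul]
        abel
      | (nn+2), ih =>
        have hga : (Θ.ga nn : ℂ) ≠ 0 := by exact_mod_cast (ne_of_gt (Θ.hga nn))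
        have hext : ∀ k : ℤ, k < (nn : ℤ) + 2 →
            (Polynomial.aeval T (extP p k)) 1 = extP r k := by
          intro k hk
          by_cases h : k < 0
          · simp [extP, h]
          · simp only [extP, if_neg h]
            exact ih k.toNat (by omega)
        have E1 := congrArg (fun q => (Polynomial.aeval T q) 1) (hp.2.2 nn)
        simp only [map_mul, map_sub, map_neg, map_add, aeval_C, aeval_X,
          Module.End.mul_apply, LinearMap.sub_apply, LinearMap.neg_apply,
          Module.algebraMap_end_apply, _root_.map_smul, map_sub, map_neg] at E1
        rw [hext ((nn : ℤ) - 2) (by omega), hext ((nn : ℤ) - 1) (by omega),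
          ih nn (by omega), ih (nn + 1) (by omega)] at E1
        have hJ3 : U (J3col Θ nn) = (extZ Θ.a ((nn : ℤ) - 1) : ℂ) • extP r ((nn : ℤ) - 1)
            + (Θ.b nn : ℂ) • r nn + (Θ.a nn : ℂ) • r (nn + 1) := by
          simp only [J3col, map_add, _root_.map_smul, hUe, hUeZ]
        have hJ5 : U (J5col Θ nn) = (extZ Θ.ga ((nn : ℤ) - 2) : ℂ) • extP r ((nn : ℤ) - 2)
            + (extZ Θ.be ((nn : ℤ) - 1) : ℂ) • extP r ((nn : ℤ) - 1)
            + (Θ.al nn : ℂ) • r nn + (Θ.be nn : ℂ) • r (nn + 1)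
            + (Θ.ga nn : ℂ) • r (nn + 2) := by
          simp only [J5col, map_add, _root_.map_smul, hUe, hUeZ]
        have H5 := hTU (J3col Θ nn)
        rw [hA.2 nn, hJ3, hJ5, map_add, map_add, _root_.map_smul, _root_.map_smul, _root_.map_smul] at H5
        have hC : ∀ (c : ℂ) (q : Polynomial ℂ), c • q = C c * q := fun c q =>
          Polynomial.smul_eq_C_mul c
        simp only [hC] at E1 H5 ⊢
        have hmain : C (Θ.ga nn : ℂ) * ((Polynomial.aeval T (p (nn + 2))) 1)
            = C (Θ.ga nn : ℂ) * r (nn + 2) := by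
          linear_combination E1 + H5
        exact mul_left_cancel₀ (by simpa using hga) hmain
  rw [key n, key m]
  exact horth n m

end
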